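/- Let Y be a real random variable on a probability space such that E|Y|^p ≤ N_p for every real p ≥ 1, where N_p = E|𝒩|^p is the p-th absolute moment of a standard normal random variable 𝒩. Then for every a ∈ [0, 1/2): E[exp(aY²)] ≤ (1 − 2a)^{−1/2}. -/

import Mathlib

open MeasureTheory ProbabilityTheory Real Nat

/-- Series expansion of the lintegral of `exp (a * X²)` for `a ≥ 0`. -/
lemma exp_sq_expand {α : Type*} [MeasurableSpace α] (μ : Measure α)
    (X : α → ℝ) (hX : Measurable X) {a : ℝ} (ha : 0 ≤ a) :
    ∫⁻ x, ENNReal.ofReal (Real.exp (a * X x ^ 2)) ∂μ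
      = ∑' n : ℕ, ENNReal.ofReal (a ^ n / n !)
          * ∫⁻ x, ENNReal.ofReal ((X x ^ 2) ^ n) ∂μ := by
  have h1 : ∀ x : α, ENNReal.ofReal (Real.exp (a * X x ^ 2))
      = ∑' n : ℕ, ENNReal.ofReal (a ^ n / n !) * ENNReal.ofReal ((X x ^ 2) ^ n) := by
    intro x
    rw [Real.exp_eq_exp_ℝ, NormedSpace.exp_eq_tsum_div]
    rw [ENNReal.ofReal_tsum_of_nonneg (fun n => by positivity)
      (Real.summable_pow_div_factorial _)]
    congr 1
    funext n
    rw [show (a * X x ^ 2) ^ n / (n ! : ℝ) = a ^ n / n ! * (X x ^ 2) ^ n by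
      rw [mul_pow]; ring]
    rw [ENNReal.ofReal_mul (by positivity)]
  simp_rw [h1]
  rw [lintegral_tsum fun n => (Measurable.const_mul
    (((hX.pow_const 2).pow_const n).ennreal_ofReal) (ENNReal.ofReal (a ^ n / n !))).aemeasurable]
  congr 1
  funext n
  rw [lintegral_const_mul _ (((hX.pow_const 2).pow_const n).ennreal_ofReal)]

theorem subgaussian_mgf_from_normal_moments
    {Ω : Type*} [MeasurableSpace Ω] (P : Measure Ω) [IsProbabilityMeasure P]
    (Y : Ω → ℝ) (hY : Measurable Y)
    (hmom : ∀ p : ℝ, 1 ≤ p →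
      ∫⁻ ω, ENNReal.ofReal (|Y ω| ^ p) ∂P
        ≤ ENNReal.ofReal (∫ t, |t| ^ p ∂(gaussianReal 0 1))) :
    ∀ a : ℝ, 0 ≤ a → a < 1 / 2 →
      ∫⁻ ω, ENNReal.ofReal (Real.exp (a * (Y ω) ^ 2)) ∂P
        ≤ ENNReal.ofReal ((1 - 2 * a) ^ (-(1 : ℝ) / 2)) := by
  intro a ha0 ha2
  set γ : Measure ℝ := gaussianReal 0 1 with hγ
  have hb : (0:ℝ) < 1/2 - a := by linarith
  have h2a : (0:ℝ) < 1 - 2*a := by linarith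
  -- rpow = pow identity for even powers
  have habs : ∀ (x : ℝ) (n : ℕ), |x| ^ (2 * (n:ℝ)) = (x ^ 2) ^ n := by
    intro x n
    rw [show (2 * (n:ℝ)) = ((2*n : ℕ) : ℝ) by push_cast; ring, Real.rpow_natCast,
      pow_mul, sq_abs]
  -- termwise moment comparison
  have key : ∀ n : ℕ, ∫⁻ ω, ENNReal.ofReal ((Y ω ^ 2) ^ n) ∂P
      ≤ ∫⁻ t, ENNReal.ofReal ((t ^ 2) ^ n) ∂γ := by
    intro n
    rcases Nat.eq_zero_or_pos n with hn | hn
    · subst hn; simp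
    · have hp : (1:ℝ) ≤ 2 * (n:ℝ) := by
        have : (1:ℝ) ≤ (n:ℝ) := by exact_mod_cast hn
        linarith
      have h1 := hmom (2 * (n:ℝ)) hp
      simp_rw [habs] at h1
      refine h1.trans ?_
      by_cases hint : Integrable (fun t : ℝ => (t ^ 2) ^ n) γ
      · rw [MeasureTheory.ofReal_integral_eq_lintegral_ofReal hint
          (ae_of_all _ fun t => by positivity)]
      · rw [integral_undef hint]; simp
  -- value of the Gaussian mgf of the square
  have hgauss : ∫⁻ t, ENNReal.ofReal (Real.exp (a * t ^ 2)) ∂γ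
      = ENNReal.ofReal ((1 - 2 * a) ^ (-(1:ℝ) / 2)) := by
    rw [hγ, gaussianReal_of_var_ne_zero 0 one_ne_zero,
      lintegral_withDensity_eq_lintegral_mul volume (measurable_gaussianPDF 0 1)
        (show Measurable fun t : ℝ => ENNReal.ofReal (Real.exp (a * t ^ 2)) by fun_prop)]
    have hfun : ∀ x : ℝ, (gaussianPDF 0 1 x * ENNReal.ofReal (Real.exp (a * x ^ 2)))
        = ENNReal.ofReal ((√(2*π))⁻¹ * Real.exp (-(1/2 - a) * x ^ 2)) := by
      intro x
      rw [gaussianPDF, ← ENNReal.ofReal_mul (gaussianPDFReal_nonneg 0 1 x)]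
      congr 1
      simp only [gaussianPDFReal, NNReal.coe_one, mul_one, sub_zero]
      rw [mul_assoc, ← Real.exp_add]
      congr 1
      ring
    simp only [Pi.mul_apply]
    simp_rw [hfun]
    rw [MeasureTheory.ofReal_integral_eq_lintegral_ofReal
      (((integrable_exp_neg_mul_sq hb).const_mul _))
      (ae_of_all _ fun t => by positivity) |>.symm]
    rw [MeasureTheory.integral_const_mul, integral_gaussian]
    congr 1
    have hπ := Real.pi_pos
    rw [show -(1:ℝ)/2 = -(1/2) by ring, Real.rpow_neg h2a.le, ← Real.sqrt_eq_rpow]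
    rw [show π / (1/2 - a) = (1 - 2*a)⁻¹ * (2 * π) by field_simp]
    rw [show √((1 - 2*a)⁻¹ * (2*π)) = (√(1-2*a))⁻¹ * √(2*π) by
      rw [Real.sqrt_mul (by positivity), Real.sqrt_inv]]
    have h2 : √(2*π) ≠ 0 := by positivity
    field_simp
  calc ∫⁻ ω, ENNReal.ofReal (Real.exp (a * (Y ω) ^ 2)) ∂P
      = ∑' n : ℕ, ENNReal.ofReal (a ^ n / n !)
          * ∫⁻ ω, ENNReal.ofReal ((Y ω ^ 2) ^ n) ∂P := exp_sq_expand P Y hY ha0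
    _ ≤ ∑' n : ℕ, ENNReal.ofReal (a ^ n / n !)
          * ∫⁻ t, ENNReal.ofReal ((t ^ 2) ^ n) ∂γ :=
        ENNReal.tsum_le_tsum fun n => mul_le_mul_right (key n) _
    _ = ∫⁻ t, ENNReal.ofReal (Real.exp (a * t ^ 2)) ∂γ :=
        (exp_sq_expand γ (fun t => t) measurable_id ha0).symm
    _ = ENNReal.ofReal ((1 - 2 * a) ^ (-(1:ℝ) / 2)) := hgauss
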